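/- arXiv:cs/9811012 — 2 statements merged into one kernel-verified Lean document; each statement's English description precedes it below -/
import Mathlib

section
/- Let a and b be terms, φ and ψ substitutions, and ρ a renaming such that vars(aρ) ∩ vars(b) = ∅ and vars(φρ) ∩ vars(ψ) = ∅. If the terms (aρ)(φρ) and bψ unify, then aρ and b unify. -/
open scoped Classical

/-- First-order terms over a set `F` of function symbols, with variables drawn from `ℕ`. -/
inductive Tm (F : Type) : Type
  | var : ℕ → Tm F
  | app : F → List (Tm F) → Tm F

namespace Tm

/-- Applying a substitution (a map from variables to terms) to a term. -/
def subst {F : Type} : Tm F → (ℕ → Tm F) → Tm F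
  | var x, θ => θ x
  | app f ts, θ => app f (ts.attach.map fun t => t.1.subst θ)
  decreasing_by
    have := List.sizeOf_lt_of_mem t.2
    simp only [Tm.app.sizeOf_spec]
    omega

/-- The set of variables occurring in a term. -/
def vars {F : Type} : Tm F → Set ℕ
  | var x => {x}
  | app _ ts => ⋃ t : {x // x ∈ ts}, t.1.vars
  decreasing_by
    have := List.sizeOf_lt_of_mem t.2
    simp only [Tm.app.sizeOf_spec]
    omega

/-- A term is ground if it contains no variables. -/
def Ground {F : Type} (t : Tm F) : Prop := t.vars = ∅

end Tm

/-- Substitutions are maps from variables to terms (finite support is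
    imposed separately by `Subst.IsSubst`). -/
abbrev Subst (F : Type) := ℕ → Tm F

namespace Subst

variable {F : Type}

/-- The domain of a substitution. -/
def dom (θ : Subst F) : Set ℕ := {x | θ x ≠ Tm.var x}

/-- A genuine substitution is the identity on all but finitely many variables. -/
def IsSubst (θ : Subst F) : Prop := (dom θ).Finite

/-- The range variables of a substitution. -/
def rang (θ : Subst F) : Set ℕ := ⋃ x ∈ dom θ, (θ x).vars

/-- vars(θ) = dom(θ) ∪ rang(θ). -/
def svars (θ : Subst F) : Set ℕ := dom θ ∪ rang θ

/-- Composition: `X (comp θ σ) = (X θ) σ`. -/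
def comp (θ σ : Subst F) : Subst F := fun x => (θ x).subst σ

/-- Restriction of a substitution to a set of variables. -/
noncomputable def restrict (θ : Subst F) (V : Set ℕ) : Subst F :=
  fun x => if x ∈ V then θ x else Tm.var x

/-- A renaming is a substitution mapping its domain injectively to variables. -/
def IsRenaming (ρ : Subst F) : Prop :=
  IsSubst ρ ∧ (∀ x, ∃ y, ρ x = Tm.var y) ∧ Set.InjOn ρ (dom ρ)

/-- Two substitutions are equivalent modulo renaming. -/
def EquivMod (σ θ : Subst F) : Prop :=
  ∃ δ ρ, IsRenaming δ ∧ IsRenaming ρ ∧ σ = comp θ δ ∧ θ = comp σ ρ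

/-- `μ` is a unifier of the terms `s` and `t`. -/
def Unifier (μ : Subst F) (s t : Tm F) : Prop :=
  IsSubst μ ∧ s.subst μ = t.subst μ

/-- Two terms unify if they have a unifier. -/
def Unify (s t : Tm F) : Prop := ∃ μ, Unifier μ s t

/-- `μ` is a most general unifier of the terms `s` and `t`. -/
def IsMGU (μ : Subst F) (s t : Tm F) : Prop :=
  Unifier μ s t ∧ ∀ τ, Unifier τ s t → ∃ δ, IsSubst δ ∧ τ = comp μ δ

/-- The image of a set of variables under a renaming: `Vρ = {Xρ | X ∈ V}`. -/
def varImage (ρ : Subst F) (V : Set ℕ) : Set ℕ := {y | ∃ x ∈ V, ρ x = Tm.var y}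

/-- The substitution `φρ`, whose bindings are `{Xρ ↦ tρ | X ↦ t a binding of φ}`. -/
noncomputable def renameSubst (φ ρ : Subst F) : Subst F := fun y =>
  if h : ∃ x, x ∈ dom φ ∧ ρ x = Tm.var y then (φ h.choose).subst ρ else Tm.var y

/-- `μ` is a unifier of a set of equations (pairs of terms). -/
def EqUnifier (μ : Subst F) (E : Set (Tm F × Tm F)) : Prop :=
  IsSubst μ ∧ ∀ e ∈ E, e.1.subst μ = e.2.subst μ

/-- `μ` is a most general unifier of a set of equations. -/
def EqIsMGU (μ : Subst F) (E : Set (Tm F × Tm F)) : Prop :=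
  EqUnifier μ E ∧ ∀ τ, EqUnifier τ E → ∃ δ, IsSubst δ ∧ τ = comp μ δ

/-- Applying a substitution to a set of equations. -/
def eqSubst (E : Set (Tm F × Tm F)) (θ : Subst F) : Set (Tm F × Tm F) :=
  (fun e => (e.1.subst θ, e.2.subst θ)) '' E

/-- `downwards(E, S) = S ∪ ⋃ {vars(t) | (X = t) ∈ E with X ∈ S}`. -/
def downwards (E : Set (Tm F × Tm F)) (S : Set ℕ) : Set ℕ :=
  S ∪ {y | ∃ x t, (Tm.var x, t) ∈ E ∧ x ∈ S ∧ y ∈ Tm.vars t}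

/-- `upwards(E, S) = S ∪ {X | (X = t) ∈ E and vars(t) ⊆ S}`. -/
def upwards (E : Set (Tm F × Tm F)) (S : Set ℕ) : Set ℕ :=
  S ∪ {x | ∃ t, (Tm.var x, t) ∈ E ∧ Tm.vars t ⊆ S}

end Subst

namespace Tm

variable {F : Type}

lemma subst_var (x : ℕ) (θ : Subst F) : (var x).subst θ = θ x := by rw [subst]

lemma subst_app (f : F) (ts : List (Tm F)) (θ : Subst F) :
    (app f ts).subst θ = app f (ts.map (·.subst θ)) := by
  rw [subst]
  congr 1
  simp [List.attach_map_val]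

lemma vars_subset_app {f : F} {ts : List (Tm F)} {t : Tm F} (ht : t ∈ ts) :
    t.vars ⊆ (app f ts).vars := by
  rw [vars]
  intro x hx
  exact Set.mem_iUnion.2 ⟨⟨t, ht⟩, hx⟩

lemma subst_subst : ∀ (t : Tm F) (θ σ : Subst F),
    (t.subst θ).subst σ = t.subst (Subst.comp θ σ)
  | var x, θ, σ => by rw [subst_var, subst_var]; rfl
  | app f ts, θ, σ => by
    rw [subst_app, subst_app, subst_app, List.map_map]
    refine congrArg _ (List.map_congr_left fun t ht => ?_)
    exact subst_subst t θ σ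
  termination_by t _ _ => sizeOf t
  decreasing_by
    have := List.sizeOf_lt_of_mem ht
    simp only [Tm.app.sizeOf_spec]
    omega

lemma subst_congr : ∀ (t : Tm F) (θ σ : Subst F),
    (∀ x ∈ t.vars, θ x = σ x) → t.subst θ = t.subst σ
  | var x, θ, σ, h => by rw [subst_var, subst_var]; exact h x (by rw [vars]; rfl)
  | app f ts, θ, σ, h => by
    rw [subst_app, subst_app]
    refine congrArg _ (List.map_congr_left fun t ht => ?_)
    exact subst_congr t θ σ (fun x hx => h x (vars_subset_app ht hx))
  termination_by t _ _ _ => sizeOf t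
  decreasing_by
    have := List.sizeOf_lt_of_mem ht
    simp only [Tm.app.sizeOf_spec]
    omega

end Tm

namespace Subst

variable {F : Type}

lemma dom_comp_subset (θ σ : Subst F) : dom (comp θ σ) ⊆ dom θ ∪ dom σ := by
  intro x hx
  by_contra h
  rw [Set.mem_union] at h
  push_neg at h
  obtain ⟨h1, h2⟩ := h
  simp only [dom, Set.mem_setOf_eq, not_not] at h1 h2
  apply hx
  show (θ x).subst σ = Tm.var x
  rw [h1, Tm.subst_var, h2]

lemma IsSubst.comp' {θ σ : Subst F} (h1 : IsSubst θ) (h2 : IsSubst σ) :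
    IsSubst (comp θ σ) :=
  (h1.union h2).subset (dom_comp_subset θ σ)

lemma isSubst_renameSubst {φ ρ : Subst F} (hφ : IsSubst φ) (hρ : IsRenaming ρ) :
    IsSubst (renameSubst φ ρ) := by
  have hsub : dom (renameSubst φ ρ) ⊆ (fun x => (hρ.2.1 x).choose) '' dom φ := by
    intro y hy
    have hne : renameSubst φ ρ y ≠ Tm.var y := hy
    rw [renameSubst] at hne
    by_cases h : ∃ x, x ∈ dom φ ∧ ρ x = Tm.var y
    · obtain ⟨x, hx, hxy⟩ := h
      refine ⟨x, hx, ?_⟩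
      have hc := (hρ.2.1 x).choose_spec
      rw [hc] at hxy
      exact Tm.var.inj hxy
    · simp [h] at hne
  exact ((hφ.image _).subset hsub)

end Subst

/-- if `vars(aρ) ∩ vars(b) = ∅`, `vars(φρ) ∩ vars(ψ) = ∅` and
`(aρ)(φρ)` and `bψ` unify, then `aρ` and `b` unify. -/
theorem stmt1 {F : Type} (a b : Tm F) (φ ψ ρ : Subst F)
    (hφ : Subst.IsSubst φ) (hψ : Subst.IsSubst ψ) (hρ : Subst.IsRenaming ρ)
    (hab : (a.subst ρ).vars ∩ b.vars = ∅)
    (hφψ : Subst.svars (Subst.renameSubst φ ρ) ∩ Subst.svars ψ = ∅)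
    (hU : Subst.Unify ((a.subst ρ).subst (Subst.renameSubst φ ρ)) (b.subst ψ)) :
    Subst.Unify (a.subst ρ) b := by
  obtain ⟨μ, hμ, heq⟩ := hU
  set A := (a.subst ρ).vars with hAdef
  refine ⟨fun x => if x ∈ A then ((Subst.renameSubst φ ρ) x).subst μ else (ψ x).subst μ,
    ?_, ?_⟩
  · have h1 : Subst.IsSubst (Subst.comp (Subst.renameSubst φ ρ) μ) :=
      (Subst.isSubst_renameSubst hφ hρ).comp' hμ
    have h2 : Subst.IsSubst (Subst.comp ψ μ) := hψ.comp' hμ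
    refine (h1.union h2).subset ?_
    intro x hx
    simp only [Subst.dom, Set.mem_setOf_eq] at hx
    by_cases hA : x ∈ A
    · exact Or.inl (by simpa [Subst.dom, Subst.comp, hA] using hx)
    · exact Or.inr (by simpa [Subst.dom, Subst.comp, hA] using hx)
  · have ha : (a.subst ρ).subst (fun x => if x ∈ A then
        ((Subst.renameSubst φ ρ) x).subst μ else (ψ x).subst μ)
        = ((a.subst ρ).subst (Subst.renameSubst φ ρ)).subst μ := by
      rw [Tm.subst_subst (a.subst ρ) (Subst.renameSubst φ ρ) μ]
      exact Tm.subst_congr _ _ _ (fun x hx => by simp [Subst.comp, show x ∈ A from hx])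
    have hb : b.subst (fun x => if x ∈ A then
        ((Subst.renameSubst φ ρ) x).subst μ else (ψ x).subst μ)
        = (b.subst ψ).subst μ := by
      rw [Tm.subst_subst b ψ μ]
      refine Tm.subst_congr _ _ _ (fun x hx => ?_)
      have hxA : x ∉ A := fun hxA =>
        Set.eq_empty_iff_forall_notMem.1 hab x ⟨hxA, hx⟩
      simp [Subst.comp, hxA]
    rw [ha, hb, heq]
end

section
/- Let E be a set of equations, each of the form X = t with X a variable and t a term, let V♭ be a set of variables, and let ζ be a substitution such that Xζ is ground for every X ∈ V♭. If η is a unifier of Eζ, then for every variable Y ∈ downwards(E, V♭), the term Y(ζ∘η) is ground. -/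
open scoped Classical

theorem Tm.vars_subst' {F : Type} (θ : ℕ → Tm F) :
    ∀ t : Tm F, (t.subst θ).vars = ⋃ x ∈ t.vars, (θ x).vars
  | .var x => by simp [Tm.subst, Tm.vars]
  | .app f ts => by
      rw [Tm.subst, Tm.vars, Tm.vars]
      ext y
      simp only [Set.mem_iUnion]
      constructor
      · rintro ⟨⟨s, hs⟩, hy⟩
        simp only [List.mem_map, List.mem_attach, true_and, Subtype.exists] at hs
        obtain ⟨u, hu, rfl⟩ := hs
        rw [Tm.vars_subst' θ u] at hy
        simp only [Set.mem_iUnion] at hy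
        obtain ⟨x, hx, hyx⟩ := hy
        exact ⟨x, ⟨⟨u, hu⟩, hx⟩, hyx⟩
      · rintro ⟨x, ⟨⟨u, hu⟩, hxu⟩, hyx⟩
        refine ⟨⟨u.subst θ, ?_⟩, ?_⟩
        · simp only [List.mem_map, List.mem_attach, true_and, Subtype.exists]
          exact ⟨u, hu, rfl⟩
        · rw [Tm.vars_subst' θ u]
          simp only [Set.mem_iUnion]
          exact ⟨x, hxu, hyx⟩
  decreasing_by
    · have := List.sizeOf_lt_of_mem hu
      simp only [Tm.app.sizeOf_spec]; omega
    · have := List.sizeOf_lt_of_mem hu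
      simp only [Tm.app.sizeOf_spec]; omega

theorem Tm.subst_subst' {F : Type} (θ σ : ℕ → Tm F) :
    ∀ t : Tm F, (t.subst θ).subst σ = t.subst (fun x => (θ x).subst σ)
  | .var x => by simp [Tm.subst]
  | .app f ts => by
      rw [Tm.subst, Tm.subst, Tm.subst]
      congr 1
      rw [List.attach_map_val (f := fun t => Tm.subst t σ), List.map_map]
      refine List.map_congr_left ?_
      rintro ⟨u, hu⟩ _
      exact Tm.subst_subst' θ σ u
  decreasing_by
    have := List.sizeOf_lt_of_mem hu
    simp only [Tm.app.sizeOf_spec]; omega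

/-- for `E` a set of equations of the form `X = t` and `ζ` with
`Xζ` ground for every `X ∈ V♭`, if `η` unifies `Eζ` then `Y(ζ∘η)` is ground
for every `Y ∈ downwards(E, V♭)`. -/
theorem stmt9 {F : Type} (E : Set (Tm F × Tm F))
    (hE : ∀ e ∈ E, ∃ x : ℕ, e.1 = Tm.var x)
    (Vb : Set ℕ) (ζ : Subst F) (hζ : Subst.IsSubst ζ)
    (hground : ∀ X ∈ Vb, (ζ X).Ground)
    (η : Subst F) (hη : Subst.EqUnifier η (Subst.eqSubst E ζ)) :
    ∀ Y ∈ Subst.downwards E Vb, (Subst.comp ζ η Y).Ground := by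
  intro Y hY
  have key : ∀ Z : ℕ, Z ∈ Vb → (Subst.comp ζ η Z).Ground := by
    intro Z hZ
    show Tm.vars ((ζ Z).subst η) = ∅
    rw [Tm.vars_subst']
    have : (ζ Z).vars = ∅ := hground Z hZ
    rw [this]; simp
  rcases hY with hY | ⟨x, t, hEt, hx, hYt⟩
  · exact key Y hY
  · have heq : (ζ x).subst η = (t.subst ζ).subst η := by
      have := hη.2 ((Tm.var x).subst ζ, t.subst ζ)
        ⟨(Tm.var x, t), hEt, rfl⟩
      simpa [Tm.subst] using this
    have hL : ((ζ x).subst η).vars = ∅ := key x hx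
    have hR : ((t.subst ζ).subst η).vars = ∅ := by rw [← heq]; exact hL
    rw [Tm.subst_subst', Tm.vars_subst'] at hR
    show Tm.vars ((ζ Y).subst η) = ∅
    have hsub : Tm.vars ((ζ Y).subst η) ⊆ ∅ := by
      rw [← hR]
      exact Set.subset_biUnion_of_mem (u := fun x => ((ζ x).subst η).vars) hYt
    exact Set.subset_empty_iff.mp hsub
end
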